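/- Let G_1, G_2 be graphs on vertex set [n] with maximum degrees Δ_1, Δ_2 and n ≥ (Δ_1+1)(Δ_2+1) - 1, and suppose the labelling pair minimizes the number of purple edges. Let uv be a purple edge. Then for every w ∈ [n] \ {v}, there exists a vertex i' with ui' ∈ E(G_2) and i'w ∈ E(G_1), or a vertex i'' with ui'' ∈ E(G_1) and i''w ∈ E(G_2). -/

import Mathlib

/-- Number of (ordered) purple pairs when `G2` is relabelled by `τ`. -/
def pcount {n : ℕ} (G1 G2 : SimpleGraph (Fin n))
    [DecidableRel G1.Adj] [DecidableRel G2.Adj] (τ : Equiv.Perm (Fin n)) : ℕ :=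
  (Finset.univ.filter fun p : Fin n × Fin n =>
    G1.Adj p.1 p.2 ∧ G2.Adj (τ p.1) (τ p.2)).card

/-- Claim 1: from a purple-minimal labelling with purple edge `uv`, every
`w ≠ v` admits a red–blue-link or a blue–red-link from `u`. -/
theorem stmt_5 {n : ℕ} (G1 G2 : SimpleGraph (Fin n))
    [DecidableRel G1.Adj] [DecidableRel G2.Adj]
    (hn : (G1.maxDegree + 1) * (G2.maxDegree + 1) ≤ n + 1)
    (hmin : ∀ τ : Equiv.Perm (Fin n), pcount G1 G2 1 ≤ pcount G1 G2 τ)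
    (u v : Fin n) (hp : G1.Adj u v ∧ G2.Adj u v) :
    ∀ w : Fin n, w ≠ v →
      (∃ i', G2.Adj u i' ∧ G1.Adj i' w) ∨ (∃ i'', G1.Adj u i'' ∧ G2.Adj i'' w) := by
  intro w hwv
  by_cases hwu : w = u
  · subst hwu
    exact Or.inl ⟨v, hp.2, hp.1.symm⟩
  by_contra hcon
  push_neg at hcon
  obtain ⟨h1, h2⟩ := hcon
  set τ : Equiv.Perm (Fin n) := Equiv.swap u w with hτ
  have hτu : τ u = w := Equiv.swap_apply_left u w
  have hτw : τ w = u := Equiv.swap_apply_right u w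
  have hτo : ∀ x : Fin n, x ≠ u → x ≠ w → τ x = x := fun x hx1 hx2 =>
    Equiv.swap_apply_of_ne_of_ne hx1 hx2
  have hsub : (Finset.univ.filter fun p : Fin n × Fin n =>
      G1.Adj p.1 p.2 ∧ G2.Adj (τ p.1) (τ p.2)) ⊆
      (Finset.univ.filter fun p : Fin n × Fin n =>
      G1.Adj p.1 p.2 ∧ G2.Adj ((1 : Equiv.Perm (Fin n)) p.1) ((1 : Equiv.Perm (Fin n)) p.2)) := by
    intro p hpmem
    simp only [Finset.mem_filter, Finset.mem_univ, true_and] at hpmem ⊢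
    simp only [Equiv.Perm.one_apply] at hpmem ⊢
    obtain ⟨ha, hb⟩ := hpmem
    refine ⟨ha, ?_⟩
    by_cases h1u : p.1 = u
    · by_cases h2w : p.2 = w
      · rw [h1u, h2w] at ha hb ⊢
        rw [hτu, hτw] at hb
        exact hb.symm
      · by_cases h2u : p.2 = u
        · rw [h1u, h2u] at ha; exact absurd ha (G1.irrefl)
        · rw [h1u] at ha hb
          rw [hτu, hτo p.2 h2u h2w] at hb
          exact absurd (hb.symm) (h2 p.2 ha)
    · by_cases h1w : p.1 = w
      · by_cases h2u : p.2 = u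
        · rw [h1w, h2u] at ha hb ⊢
          rw [hτw, hτu] at hb
          exact hb.symm
        · by_cases h2w : p.2 = w
          · rw [h1w, h2w] at ha; exact absurd ha (G1.irrefl)
          · rw [h1w] at ha hb
            rw [hτw, hτo p.2 h2u h2w] at hb
            exact absurd ha.symm (h1 p.2 hb)
      · by_cases h2u : p.2 = u
        · rw [h2u] at ha hb
          rw [hτu, hτo p.1 h1u h1w] at hb
          exact absurd hb (h2 p.1 ha.symm)
        · by_cases h2w : p.2 = w
          · rw [h2w] at ha hb
            rw [hτw, hτo p.1 h1u h1w] at hb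
            exact absurd ha (h1 p.1 hb.symm)
          · rw [hτo p.1 h1u h1w, hτo p.2 h2u h2w] at hb
            exact hb
  have hvu : v ≠ u := fun h => G1.irrefl (h ▸ hp.1)
  have hmem : ((u, v) : Fin n × Fin n) ∈
      (Finset.univ.filter fun p : Fin n × Fin n =>
      G1.Adj p.1 p.2 ∧ G2.Adj ((1 : Equiv.Perm (Fin n)) p.1) ((1 : Equiv.Perm (Fin n)) p.2)) := by
    simp only [Finset.mem_filter, Finset.mem_univ, true_and]
    simp only [Equiv.Perm.one_apply]
    exact hp
  have hnot : ((u, v) : Fin n × Fin n) ∉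
      (Finset.univ.filter fun p : Fin n × Fin n =>
      G1.Adj p.1 p.2 ∧ G2.Adj (τ p.1) (τ p.2)) := by
    simp only [Finset.mem_filter, Finset.mem_univ, true_and]
    intro hmem'
    have : G2.Adj w v := by
      have := hmem'.2
      rwa [hτu, hτo v hvu (fun h => hwv h.symm)] at this
    exact h2 v hp.1 this.symm
  have hlt : pcount G1 G2 τ < pcount G1 G2 1 := by
    apply Finset.card_lt_card
    exact (Finset.ssubset_iff_of_subset hsub).mpr ⟨(u, v), hmem, hnot⟩
  exact absurd (hmin τ) (not_le.mpr hlt)
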